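/- Let A be a 2×2 real matrix with tr(A) < 0 and det(A) > 0, d₁, d₂ > 0, and set Γ = d₁ A₂₂ + d₂ A₁₁. If Γ > 0 and Γ² > 4 d₁ d₂ det(A), then there exists k > 0 such that det(A - diag(d₁ k², d₂ k²)) < 0; in particular L(k) = A - diag(d₁ k², d₂ k²) has a positive real eigenvalue. -/

import Mathlib

open Matrix

lemma eig_of_det_neg (M : Matrix (Fin 2) (Fin 2) ℝ) (h : M.det < 0) :
    ∃ lam : ℝ, 0 < lam ∧ ∃ x : Fin 2 → ℝ, x ≠ 0 ∧ M.mulVec x = lam • x := by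
  set t := M.trace with ht
  set D := M.det with hD
  have hdisc : 0 ≤ t ^ 2 - 4 * D := by nlinarith [sq_nonneg t]
  set s := Real.sqrt (t ^ 2 - 4 * D) with hsdef
  have hs : s ^ 2 = t ^ 2 - 4 * D := Real.sq_sqrt hdisc
  have hsgt : |t| < s := by
    have h1 : Real.sqrt (t ^ 2) < Real.sqrt (t ^ 2 - 4 * D) :=
      Real.sqrt_lt_sqrt (sq_nonneg t) (by linarith)
    rwa [Real.sqrt_sq_eq_abs] at h1
  set lam := (t + s) / 2 with hlam
  have hlampos : 0 < lam := by
    have := neg_abs_le t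
    rw [hlam]; linarith
  have h2 : 2 * lam - t = s := by rw [hlam]; ring
  have hchar : lam ^ 2 - t * lam + D = 0 := by
    linear_combination ((2 * lam - t + s) / 4) * h2 + (1 / 4) * hs
  have hDfin : D = M 0 0 * M 1 1 - M 0 1 * M 1 0 := Matrix.det_fin_two M
  have htfin : t = M 0 0 + M 1 1 := Matrix.trace_fin_two M
  rw [hDfin, htfin] at hchar
  have hdetN : (M - lam • 1).det = 0 := by
    rw [Matrix.det_fin_two]
    simp [Matrix.sub_apply, Matrix.smul_apply, Matrix.one_apply]
    linear_combination hchar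
  obtain ⟨x, hx0, hx⟩ := (Matrix.exists_mulVec_eq_zero_iff).mpr hdetN
  refine ⟨lam, hlampos, x, hx0, ?_⟩
  rw [Matrix.sub_mulVec, Matrix.smul_mulVec, Matrix.one_mulVec, sub_eq_zero] at hx
  exact hx

/-- Turing instability criterion: if `tr A < 0`, `det A > 0`, `Γ > 0` and
`Γ² > 4 d₁ d₂ det A`, then some mode `k > 0` has `det L(k) < 0` and `L(k)` has a
positive real eigenvalue. -/
theorem stmt_6 (A : Matrix (Fin 2) (Fin 2) ℝ) (d₁ d₂ : ℝ) (hd₁ : 0 < d₁) (hd₂ : 0 < d₂)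
    (htr : A.trace < 0) (hdet : 0 < A.det)
    (hΓ : 0 < d₁ * A 1 1 + d₂ * A 0 0)
    (hΓ2 : (d₁ * A 1 1 + d₂ * A 0 0) ^ 2 > 4 * d₁ * d₂ * A.det) :
    ∃ k : ℝ, 0 < k ∧
      (A - Matrix.diagonal ![d₁ * k ^ 2, d₂ * k ^ 2]).det < 0 ∧
      ∃ lam : ℝ, 0 < lam ∧ ∃ x : Fin 2 → ℝ, x ≠ 0 ∧
        (A - Matrix.diagonal ![d₁ * k ^ 2, d₂ * k ^ 2]).mulVec x = lam • x := by
  set Γ := d₁ * A 1 1 + d₂ * A 0 0 with hΓdef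
  have hdd : 0 < d₁ * d₂ := mul_pos hd₁ hd₂
  set sq := Γ / (2 * (d₁ * d₂)) with hsq
  have hsqpos : 0 < sq := div_pos hΓ (by linarith)
  refine ⟨Real.sqrt sq, Real.sqrt_pos.mpr hsqpos, ?_⟩
  have hk2 : Real.sqrt sq ^ 2 = sq := Real.sq_sqrt hsqpos.le
  have hDfin : A.det = A 0 0 * A 1 1 - A 0 1 * A 1 0 := Matrix.det_fin_two A
  have hdetL : (A - Matrix.diagonal ![d₁ * Real.sqrt sq ^ 2, d₂ * Real.sqrt sq ^ 2]).det < 0 := by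
    rw [Matrix.det_fin_two]
    simp [Matrix.sub_apply, Matrix.diagonal_apply, hk2]
    have h1 : sq * (2 * (d₁ * d₂)) = Γ := by rw [hsq]; exact div_mul_cancel₀ _ (ne_of_gt (by linarith))
    nlinarith [hΓ2, hDfin, h1, sq_nonneg (2 * (d₁*d₂) * sq - Γ)]
  exact ⟨hdetL, eig_of_det_neg _ hdetL⟩
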